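/- arXiv:2408.01186 — 5 statements merged into one kernel-verified Lean document; each statement's English description precedes it below -/
import Mathlib

section
/- Let n ≥ 1 and 0 < t₁ < t₂ < ... < tₙ be distinct positive reals, and let P(x) = ∏_{k=1}^n (x² − t_k²). Then for any r > tₙ there exist even polynomials Q and R, both nonnegative on ℝ, such that P(x) = (x² − r²)·Q(x) + R(x) for all real x. -/
open Polynomial

/-- Auxiliary polynomial: product over consecutive pairs of `(X - √(a*b))²`,
with leftover factor `C a` if the list has odd length. -/
noncomputable def pdRpl : List ℝ → Polynomial ℝ
  | [] => 1
  | [a] => Polynomial.C a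
  | a :: b :: rest => (Polynomial.X - Polynomial.C (Real.sqrt (a * b))) ^ 2 * pdRpl rest

lemma pdRpl_nonneg : ∀ (l : List ℝ), (∀ a ∈ l, (0:ℝ) ≤ a) → ∀ w : ℝ, 0 ≤ (pdRpl l).eval w
  | [], _, w => by simp [pdRpl]
  | [a], h, w => by simpa [pdRpl] using h a (by simp)
  | a :: b :: rest, h, w => by
      have ih := pdRpl_nonneg rest (fun x hx => h x (by simp [hx])) w
      simp only [pdRpl, eval_mul, eval_pow, eval_sub, eval_X, eval_C]
      exact mul_nonneg (sq_nonneg _) ih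

lemma pdRpl_eval_zero : ∀ (l : List ℝ), (∀ a ∈ l, (0:ℝ) ≤ a) → (pdRpl l).eval 0 = l.prod
  | [], _ => by simp [pdRpl]
  | [a], _ => by simp [pdRpl]
  | a :: b :: rest, h => by
      have ih := pdRpl_eval_zero rest (fun x hx => h x (by simp [hx]))
      have hab : (0:ℝ) ≤ a * b := mul_nonneg (h a (by simp)) (h b (by simp))
      have hs : Real.sqrt (a * b) ^ 2 = a * b := Real.sq_sqrt hab
      have h0 : ((0:ℝ) - Real.sqrt (a * b)) ^ 2 = a * b := by rw [zero_sub, neg_sq, hs]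
      simp only [pdRpl, eval_mul, eval_pow, eval_sub, eval_X, eval_C, List.prod_cons, ih, h0]
      ring

/-- Claim (A): for `w ≥ 0`, `pdRpl l` is below `∏ (a + w)`. -/
lemma pdRpl_le : ∀ (l : List ℝ), (∀ a ∈ l, (0:ℝ) ≤ a) → ∀ w : ℝ, 0 ≤ w →
    (pdRpl l).eval w ≤ (l.map (fun a => a + w)).prod
  | [], _, w, hw => by simp [pdRpl]
  | [a], h, w, hw => by
      simp only [pdRpl, eval_C, List.map_cons, List.map_nil, List.prod_cons, List.prod_nil,
        mul_one]
      linarith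
  | a :: b :: rest, h, w, hw => by
      have ha := h a (by simp)
      have hb := h b (by simp)
      have hrest : ∀ x ∈ rest, (0:ℝ) ≤ x := fun x hx => h x (by simp [hx])
      have ih := pdRpl_le rest hrest w hw
      have hK := pdRpl_nonneg rest hrest w
      have hs : Real.sqrt (a * b) ^ 2 = a * b := Real.sq_sqrt (mul_nonneg ha hb)
      have hsnn : 0 ≤ Real.sqrt (a * b) := Real.sqrt_nonneg _
      have hpair : (w - Real.sqrt (a * b)) ^ 2 ≤ (a + w) * (b + w) := by nlinarith
      have hFpair : (0:ℝ) ≤ (a + w) * (b + w) :=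
        mul_nonneg (by linarith) (by linarith)
      simp only [pdRpl, eval_mul, eval_pow, eval_sub, eval_X, eval_C, List.map_cons,
        List.prod_cons]
      calc (w - Real.sqrt (a * b)) ^ 2 * (pdRpl rest).eval w
          ≤ ((a + w) * (b + w)) * (rest.map (fun a => a + w)).prod :=
            mul_le_mul hpair ih hK hFpair
        _ = (a + w) * ((b + w) * (rest.map (fun a => a + w)).prod) := by ring

/-- Claim (B): for `W ≥ 0` and `l` sorted ascending, `∏ (a - W) ≤ pdRpl l` at `-W`. -/
lemma le_pdRpl : ∀ (l : List ℝ), l.Pairwise (· ≤ ·) → (∀ a ∈ l, (0:ℝ) ≤ a) → ∀ W : ℝ, 0 ≤ W →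
    (l.map (fun a => a - W)).prod ≤ (pdRpl l).eval (-W)
  | [], _, _, W, hW => by simp [pdRpl]
  | [a], _, h, W, hW => by
      simp only [pdRpl, eval_C, List.map_cons, List.map_nil, List.prod_cons, List.prod_nil,
        mul_one]
      linarith
  | a :: b :: rest, hsort, h, W, hW => by
      have ha := h a (by simp)
      have hb := h b (by simp)
      have hrest : ∀ x ∈ rest, (0:ℝ) ≤ x := fun x hx => h x (by simp [hx])
      have hab : a ≤ b := (List.pairwise_cons.mp hsort).1 b (by simp)
      have hbrest : ∀ x ∈ rest, b ≤ x :=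
        fun x hx => (List.pairwise_cons.mp (List.pairwise_cons.mp hsort).2).1 x hx
      have hsort' : rest.Pairwise (· ≤ ·) := (List.pairwise_cons.mp (List.pairwise_cons.mp hsort).2).2
      have ih := le_pdRpl rest hsort' hrest W hW
      have hK := pdRpl_nonneg rest hrest (-W)
      have hs : Real.sqrt (a * b) ^ 2 = a * b := Real.sq_sqrt (mul_nonneg ha hb)
      have hsnn : 0 ≤ Real.sqrt (a * b) := Real.sqrt_nonneg _
      have hRHSnn : (0:ℝ) ≤ (-W - Real.sqrt (a * b)) ^ 2 * (pdRpl rest).eval (-W) :=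
        mul_nonneg (sq_nonneg _) hK
      simp only [pdRpl, eval_mul, eval_pow, eval_sub, eval_X, eval_C, List.map_cons,
        List.prod_cons]
      rcases le_or_gt W b with hWb | hWb
      · -- b - W ≥ 0, rest factors nonneg
        have hP : (0:ℝ) ≤ (rest.map (fun a => a - W)).prod := by
          apply List.prod_nonneg
          intro y hy
          obtain ⟨x, hx, rfl⟩ := List.mem_map.mp hy
          have := hbrest x hx
          linarith
        rcases le_or_gt W a with hWa | hWa
        · -- all nonneg case
          have hpair : (a - W) * (b - W) ≤ (-W - Real.sqrt (a * b)) ^ 2 := by nlinarith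
          have hPb : (0:ℝ) ≤ (b - W) * (rest.map (fun a => a - W)).prod := by
            have : (0:ℝ) ≤ b - W := by linarith
            exact mul_nonneg this hP
          calc (a - W) * ((b - W) * (rest.map (fun a => a - W)).prod)
              = ((a - W) * (b - W)) * (rest.map (fun a => a - W)).prod := by ring
            _ ≤ (-W - Real.sqrt (a * b)) ^ 2 * (pdRpl rest).eval (-W) := by
                apply mul_le_mul hpair ih hP (sq_nonneg _)
        · -- a < W ≤ b : LHS ≤ 0
          have hneg : (a - W) * ((b - W) * (rest.map (fun a => a - W)).prod) ≤ 0 := by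
            apply mul_nonpos_of_nonpos_of_nonneg (by linarith)
            exact mul_nonneg (by linarith) hP
          linarith
      · -- W > b ≥ a : pair is (W-a)(W-b) ≥ 0
        have hpair : (a - W) * (b - W) ≤ (-W - Real.sqrt (a * b)) ^ 2 := by nlinarith
        have hpairnn : (0:ℝ) ≤ (a - W) * (b - W) := by nlinarith
        rcases le_or_gt (rest.map (fun a => a - W)).prod 0 with hP | hP
        · have hneg : (a - W) * ((b - W) * (rest.map (fun a => a - W)).prod) ≤ 0 := by
            have h1 : (0:ℝ) ≤ (W - a) := by linarith
            have h2 : (rest.map (fun a => a - W)).prod * ((a-W)*(b-W)) ≤ 0 :=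
              mul_nonpos_of_nonpos_of_nonneg hP hpairnn
            nlinarith
          linarith
        · calc (a - W) * ((b - W) * (rest.map (fun a => a - W)).prod)
              = ((a - W) * (b - W)) * (rest.map (fun a => a - W)).prod := by ring
            _ ≤ (-W - Real.sqrt (a * b)) ^ 2 * (pdRpl rest).eval (-W) := by
                apply mul_le_mul hpair ih (le_of_lt hP) (sq_nonneg _)

/-- polynomial decomposition `∏ (x² − t_k²) = (x² − r²) Q(x) + R(x)`
with `Q, R` even and nonnegative on `ℝ`. -/
theorem polynomial_decomposition (n : ℕ) (hn : 1 ≤ n) (t : Fin n → ℝ)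
    (ht0 : ∀ k, 0 < t k) (htmono : StrictMono t)
    (r : ℝ) (hr : ∀ k, t k < r) :
    ∃ Q R : Polynomial ℝ,
      (∀ x : ℝ, Q.eval (-x) = Q.eval x) ∧ (∀ x : ℝ, R.eval (-x) = R.eval x) ∧
      (∀ x : ℝ, 0 ≤ Q.eval x) ∧ (∀ x : ℝ, 0 ≤ R.eval x) ∧
      (∀ x : ℝ, (∏ k, (x ^ 2 - t k ^ 2)) = (x ^ 2 - r ^ 2) * Q.eval x + R.eval x) := by
  classical
  set M : Multiset ℝ := Finset.univ.val.map (fun k => r ^ 2 - t k ^ 2) with hM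
  set l : List ℝ := M.sort (· ≤ ·) with hl
  have hlM : (↑l : Multiset ℝ) = M := Multiset.sort_eq M _
  have hl_sorted : l.Pairwise (· ≤ ·) := Multiset.pairwise_sort M _
  have hl_pos : ∀ a ∈ l, (0:ℝ) ≤ a := by
    intro a hal
    have : a ∈ M := by rw [← hlM]; exact_mod_cast hal
    rw [hM] at this
    obtain ⟨k, _, rfl⟩ := Multiset.mem_map.mp this
    have h1 := ht0 k
    have h2 := hr k
    nlinarith
  -- the polynomial F(w) = ∏ (w + a)
  set Fl : Polynomial ℝ := (l.map (fun a => Polynomial.X + Polynomial.C a)).prod with hFl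
  have hFl_eval : ∀ w : ℝ, Fl.eval w = (l.map (fun a => a + w)).prod := by
    intro w
    rw [hFl, eval_list_prod, List.map_map]
    congr 1
    apply List.map_congr_left
    intro a _
    simp [add_comm]
  set Rp : Polynomial ℝ := pdRpl l with hRp
  set qp : Polynomial ℝ := (Fl - Rp).divX with hqp
  have hcoeff0 : (Fl - Rp).coeff 0 = 0 := by
    rw [coeff_zero_eq_eval_zero, eval_sub, hFl_eval 0, hRp, pdRpl_eval_zero l hl_pos]
    simp
  have hkey : Fl = Polynomial.X * qp + Rp := by
    have h := Polynomial.X_mul_divX_add (Fl - Rp)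
    rw [hcoeff0] at h
    simp only [map_zero, add_zero] at h
    rw [hqp, h]
    ring
  have hkey_eval : ∀ w : ℝ, Fl.eval w = w * qp.eval w + Rp.eval w := by
    intro w
    rw [hkey]
    simp
  -- nonnegativity of qp everywhere
  have hq_pos : ∀ w : ℝ, 0 < w → 0 ≤ qp.eval w := by
    intro w hw
    have hA := pdRpl_le l hl_pos w (le_of_lt hw)
    have := hkey_eval w
    rw [hFl_eval w] at this
    have hwq : 0 ≤ w * qp.eval w := by
      rw [hRp] at *
      linarith
    nlinarith
  have hq_neg : ∀ w : ℝ, w < 0 → 0 ≤ qp.eval w := by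
    intro w hw
    have hB := le_pdRpl l hl_sorted hl_pos (-w) (by linarith)
    have heq : (l.map (fun a => a - -w)).prod = (l.map (fun a => a + w)).prod := by
      congr 1
      apply List.map_congr_left
      intro a _
      ring
    rw [heq] at hB
    have := hkey_eval w
    rw [hFl_eval w] at this
    have hwq : w * qp.eval w ≤ 0 := by
      rw [hRp] at *
      simp only [neg_neg] at hB
      linarith
    by_contra hc
    push_neg at hc
    have : 0 < w * qp.eval w := mul_pos_of_neg_of_neg hw hc
    linarith
  have hq : ∀ w : ℝ, 0 ≤ qp.eval w := by
    intro w
    rcases lt_trichotomy w 0 with hw | hw | hw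
    · exact hq_neg w hw
    · subst hw
      have hcont : Filter.Tendsto (fun y : ℝ => qp.eval y) (nhdsWithin 0 (Set.Ioi 0))
          (nhds (qp.eval 0)) :=
        ((Polynomial.continuous qp).tendsto 0).mono_left nhdsWithin_le_nhds
      refine ge_of_tendsto hcont ?_
      filter_upwards [self_mem_nhdsWithin] with y hy
      exact hq_pos y hy
    · exact hq_pos w hw
  -- assemble
  refine ⟨qp.comp (Polynomial.X ^ 2 - Polynomial.C (r ^ 2)),
          Rp.comp (Polynomial.X ^ 2 - Polynomial.C (r ^ 2)), ?_, ?_, ?_, ?_, ?_⟩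
  · intro x; simp [eval_comp]
  · intro x; simp [eval_comp]
  · intro x
    simp only [eval_comp, eval_sub, eval_pow, eval_X, eval_C]
    exact hq _
  · intro x
    simp only [eval_comp, eval_sub, eval_pow, eval_X, eval_C]
    exact pdRpl_nonneg l hl_pos _
  · intro x
    simp only [eval_comp, eval_sub, eval_pow, eval_X, eval_C]
    have hre : (∏ k, (x ^ 2 - t k ^ 2)) = Fl.eval (x ^ 2 - r ^ 2) := by
      rw [hFl_eval]
      have : (l.map (fun a => a + (x ^ 2 - r ^ 2))).prod
          = ((↑l : Multiset ℝ).map (fun a => a + (x ^ 2 - r ^ 2))).prod := by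
        rw [Multiset.map_coe, Multiset.prod_coe]
      rw [this, hlM, hM, Multiset.map_map]
      rw [Finset.prod_eq_multiset_prod]
      congr 1
      apply Multiset.map_congr rfl
      intro k _
      simp only [Function.comp_apply]
      ring
    rw [hre, hkey_eval]
end

section
/- Let n ≥ 1 and 0 < t₁ < ... < tₙ < r. Then there exist even polynomials Q, R nonnegative on ℝ with ∏_{k=1}^n (x² − t_k²) = (x² − r²)Q(x) + R(x), where deg Q = 2n−2 and deg R = 2n−2 if n is odd, and deg Q = 2n−4 and deg R = 2n if n is even. -/
open Polynomial Finset

private lemma pair_identity {a b d : ℝ} (hab : a < b) (hbd : b < d) :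
    (X - C a) * (X - C b) =
      (X - C d) * C (2*d - a - b + 2 * Real.sqrt ((d-a)*(d-b)))
        + (X - C (d + Real.sqrt ((d-a)*(d-b)))) ^ 2 := by
  have hw : Real.sqrt ((d-a)*(d-b)) * Real.sqrt ((d-a)*(d-b)) = (d-a)*(d-b) :=
    Real.mul_self_sqrt (by nlinarith)
  apply Polynomial.funext
  intro x
  simp only [eval_mul, eval_add, eval_sub, eval_pow, eval_X, eval_C]
  linear_combination -hw

private lemma step_nonneg {a b d c y Qy Ry Py : ℝ} (hab : a < b) (hbd : b < d)
    (hQ : 0 ≤ Qy) (hR : 0 ≤ Ry) (hc0 : 0 < c) (hcba : b - a ≤ c) (hp : 0 ≤ Py)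
    (hev : Py = (y - d) * Qy + Ry) (h1 : a < y) (h2 : y < b) :
    0 ≤ (y - a) * (y - b) * Qy + c * Ry := by
  have h3 : (y - a) * (b - y) ≤ (b - a) * (d - y) := by nlinarith
  have h4 : (y - a) * (b - y) * Qy ≤ c * (d - y) * Qy := by
    apply mul_le_mul_of_nonneg_right _ hQ
    nlinarith
  have h5 : c * ((d - y) * Qy) ≤ c * Ry := by
    apply mul_le_mul_of_nonneg_left _ (le_of_lt hc0)
    nlinarith
  nlinarith

set_option maxHeartbeats 1000000 in
private lemma aux_decomp (d : ℝ) (u : ℕ → ℝ) :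
    ∀ n, 1 ≤ n → (∀ i j, i < j → j < n → u i < u j) → (∀ k, k < n → u k < d) →
    ∃ q ρ : Polynomial ℝ,
      (∀ y : ℝ, 0 ≤ y → 0 ≤ q.eval y) ∧ (∀ y : ℝ, 0 ≤ y → 0 ≤ ρ.eval y) ∧
      (∏ k ∈ Finset.range n, (X - C (u k))) = (X - C d) * q + ρ ∧
      q.natDegree = (if Odd n then n - 1 else n - 2) ∧
      ρ.natDegree = (if Odd n then n - 1 else n) ∧
      0 < q.leadingCoeff ∧ 0 < ρ.leadingCoeff := by
  intro n
  induction n using Nat.strong_induction_on with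
  | _ n IH =>
    intro hn hmono hbd
    match n, hn with
    | 1, _ =>
      have h0 : u 0 < d := hbd 0 (by omega)
      refine ⟨1, C (d - u 0), ?_, ?_, ?_, ?_, ?_, ?_, ?_⟩
      · intro y _; simp
      · intro y _; rw [eval_C]; linarith
      · rw [Finset.prod_range_one, C_sub]; ring
      · simp
      · simp
      · simp
      · rw [leadingCoeff_C]; linarith
    | 2, _ =>
      have hab : u 0 < u 1 := hmono 0 1 (by omega) (by omega)
      have hbd1 : u 1 < d := hbd 1 (by omega)
      set a := u 0
      set b := u 1
      set w := Real.sqrt ((d-a)*(d-b)) with hwdef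
      have hw0 : 0 ≤ w := Real.sqrt_nonneg _
      have hc0 : 0 < 2*d - a - b + 2*w := by nlinarith
      have hodd2 : ¬ Odd 2 := by decide
      refine ⟨C (2*d - a - b + 2*w), (X - C (d + w)) ^ 2, ?_, ?_, ?_, ?_, ?_, ?_, ?_⟩
      · intro y _; rw [eval_C]; linarith
      · intro y _; simp only [eval_pow, eval_sub, eval_X, eval_C]; positivity
      · rw [Finset.prod_range_succ, Finset.prod_range_one]
        exact pair_identity hab hbd1
      · rw [if_neg hodd2, natDegree_C]
      · rw [if_neg hodd2, natDegree_pow, natDegree_X_sub_C]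
      · rwa [leadingCoeff_C]
      · rw [leadingCoeff_pow, leadingCoeff_X_sub_C]; norm_num
    | (m+3), _ =>
      -- step: apply IH to m+1, add roots u (m+1), u (m+2)
      obtain ⟨q, ρ, hq0, hρ0, hP, hdq, hdρ, hlq, hlρ⟩ :=
        IH (m+1) (by omega) (by omega)
          (fun i j hij hj => hmono i j hij (by omega))
          (fun k hk => hbd k (by omega))
      have hab : u (m+1) < u (m+2) := hmono (m+1) (m+2) (by omega) (by omega)
      have hbd2 : u (m+2) < d := hbd (m+2) (by omega)
      have hka : ∀ k, k < m+1 → u k < u (m+1) := fun k hk => hmono k (m+1) hk (by omega)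
      set a := u (m+1) with ha
      set b := u (m+2) with hb
      set w := Real.sqrt ((d-a)*(d-b)) with hwdef
      have hw0 : 0 ≤ w := Real.sqrt_nonneg _
      set c := 2*d - a - b + 2*w with hcdef
      have hc0 : 0 < c := by rw [hcdef]; nlinarith
      have hcba : b - a ≤ c := by rw [hcdef]; nlinarith
      have hqne : q ≠ 0 := leadingCoeff_ne_zero.mp (ne_of_gt hlq)
      have hρne : ρ ≠ 0 := leadingCoeff_ne_zero.mp (ne_of_gt hlρ)
      have hodd3 : Odd (m+3) ↔ Odd (m+1) := by
        constructor
        · rintro ⟨j, hj⟩; exact ⟨j-1, by omega⟩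
        · rintro ⟨j, hj⟩; exact ⟨j+1, by omega⟩
      -- degree facts
      have hm2 : ((X - C a) * (X - C b)).Monic := (monic_X_sub_C a).mul (monic_X_sub_C b)
      have hAdeg : ((X - C a) * (X - C b) * q).natDegree = q.natDegree + 2 := by
        rw [natDegree_mul hm2.ne_zero hqne,
          natDegree_mul (X_sub_C_ne_zero a) (X_sub_C_ne_zero b),
          natDegree_X_sub_C, natDegree_X_sub_C]
        omega
      have hAlead : ((X - C a) * (X - C b) * q).leadingCoeff = q.leadingCoeff := by
        rw [leadingCoeff_mul, hm2.leadingCoeff, one_mul]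
      have hBdeg : (C c * ρ).natDegree = ρ.natDegree := natDegree_C_mul (ne_of_gt hc0)
      have hBlead : (C c * ρ).leadingCoeff = c * ρ.leadingCoeff := by
        rw [leadingCoeff_mul, leadingCoeff_C]
      have hRdeg : ((X - C (d + w)) ^ 2 * ρ).natDegree = ρ.natDegree + 2 := by
        rw [natDegree_mul (pow_ne_zero 2 (X_sub_C_ne_zero _)) hρne, natDegree_pow,
          natDegree_X_sub_C]
        omega
      have hRlead : ((X - C (d + w)) ^ 2 * ρ).leadingCoeff = ρ.leadingCoeff := by
        rw [leadingCoeff_mul, leadingCoeff_pow, leadingCoeff_X_sub_C, one_pow, one_mul]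
      -- the top coefficient of the new q
      set N : ℕ := if Odd (m+1) then m+2 else m+1 with hN
      have hqdeg : q.natDegree = if Odd (m+1) then m else m - 1 := by
        rcases Nat.even_or_odd (m+1) with he | ho
        · rw [if_neg (Nat.not_odd_iff_even.mpr he)] at hdq ⊢
          omega
        · rw [if_pos ho] at hdq ⊢; omega
      have hρdeg : ρ.natDegree = if Odd (m+1) then m else m + 1 := by
        rcases Nat.even_or_odd (m+1) with he | ho
        · rw [if_neg (Nat.not_odd_iff_even.mpr he)] at hdρ ⊢; exact hdρ
        · rw [if_pos ho] at hdρ ⊢; omega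
      have hme : ¬ Odd (m+1) → 1 ≤ m := by
        intro h; rcases Nat.even_or_odd (m+1) with ⟨j, hj⟩ | ho
        · omega
        · exact absurd ho h
      have hQcoeff : ((X - C a) * (X - C b) * q + C c * ρ).coeff N =
          q.leadingCoeff + (if Odd (m+1) then 0 else c * ρ.leadingCoeff) := by
        rw [coeff_add]
        congr 1
        · have : N = ((X - C a) * (X - C b) * q).natDegree := by
            rw [hAdeg, hqdeg, hN]
            rcases Nat.even_or_odd (m+1) with he | ho
            · have h1 : ¬ Odd (m+1) := Nat.not_odd_iff_even.mpr he
              rw [if_neg h1, if_neg h1]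
              have := hme h1
              omega
            · rw [if_pos ho, if_pos ho]
          rw [this, coeff_natDegree, hAlead]
        · rcases Nat.even_or_odd (m+1) with he | ho
          · have h1 : ¬ Odd (m+1) := Nat.not_odd_iff_even.mpr he
            rw [if_neg h1]
            have : N = (C c * ρ).natDegree := by
              rw [hBdeg, hρdeg, hN, if_neg h1, if_neg h1]
            rw [this, coeff_natDegree, hBlead]
          · rw [if_pos ho]
            apply coeff_eq_zero_of_natDegree_lt
            rw [hBdeg, hρdeg, if_pos ho, hN, if_pos ho]
            omega
      have hQcpos : 0 < ((X - C a) * (X - C b) * q + C c * ρ).coeff N := by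
        rw [hQcoeff]
        rcases Nat.even_or_odd (m+1) with he | ho
        · have h1 : ¬ Odd (m+1) := Nat.not_odd_iff_even.mpr he
          rw [if_neg h1]
          exact add_pos hlq (mul_pos hc0 hlρ)
        · rw [if_pos ho, add_zero]; exact hlq
      have hQle : ((X - C a) * (X - C b) * q + C c * ρ).natDegree ≤ N := by
        refine le_trans (natDegree_add_le _ _) ?_
        rw [hAdeg, hBdeg, hqdeg, hρdeg, hN]
        rcases Nat.even_or_odd (m+1) with he | ho
        · have h1 : ¬ Odd (m+1) := Nat.not_odd_iff_even.mpr he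
          have := hme h1
          rw [if_neg h1, if_neg h1, if_neg h1]
          omega
        · rw [if_pos ho, if_pos ho, if_pos ho]
          omega
      have hQdeg : ((X - C a) * (X - C b) * q + C c * ρ).natDegree = N :=
        le_antisymm hQle (le_natDegree_of_ne_zero (ne_of_gt hQcpos))
      refine ⟨(X - C a) * (X - C b) * q + C c * ρ, (X - C (d + w)) ^ 2 * ρ,
        ?_, ?_, ?_, ?_, ?_, ?_, ?_⟩
      · -- nonnegativity of q'
        intro y hy
        have hQ := hq0 y hy
        have hR := hρ0 y hy
        simp only [eval_add, eval_mul, eval_sub, eval_X, eval_C]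
        rcases le_or_gt y a with h | h
        · have h1 : 0 ≤ (a - y) * (b - y) := mul_nonneg (by linarith) (by linarith)
          nlinarith
        rcases le_or_gt b y with h2 | h2
        · have h1 : 0 ≤ (y - a) * (y - b) := mul_nonneg (by linarith) (by linarith)
          nlinarith
        · have hp : 0 ≤ eval y (∏ k ∈ Finset.range (m+1), (X - C (u k))) := by
            rw [Polynomial.eval_prod]
            apply Finset.prod_nonneg
            intro k hk
            simp only [eval_sub, eval_X, eval_C]
            have := hka k (Finset.mem_range.mp hk)
            linarith
          have hev := congrArg (Polynomial.eval y) hP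
          simp only [eval_add, eval_mul, eval_sub, eval_X, eval_C] at hev
          exact step_nonneg hab hbd2 hQ hR hc0 hcba hp hev h h2
      · -- nonnegativity of ρ'
        intro y hy
        have hR := hρ0 y hy
        simp only [eval_mul, eval_pow, eval_sub, eval_X, eval_C]
        positivity
      · -- decomposition identity
        rw [Finset.prod_range_succ, Finset.prod_range_succ, hP]
        have hpair := pair_identity hab hbd2
        rw [← hwdef, ← hcdef] at hpair
        linear_combination ρ * hpair
      · rw [hQdeg, hN]
        rcases Nat.even_or_odd (m+1) with he | ho
        · have h1 : ¬ Odd (m+1) := Nat.not_odd_iff_even.mpr he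
          rw [if_neg h1, if_neg (by rw [hodd3]; exact h1)]; omega
        · rw [if_pos ho, if_pos (hodd3.mpr ho)]; omega
      · rw [hRdeg, hρdeg]
        rcases Nat.even_or_odd (m+1) with he | ho
        · have h1 : ¬ Odd (m+1) := Nat.not_odd_iff_even.mpr he
          rw [if_neg h1, if_neg (by rw [hodd3]; exact h1)]
        · rw [if_pos ho, if_pos (hodd3.mpr ho)]; omega
      · rw [leadingCoeff, hQdeg]; exact hQcpos
      · rw [hRlead]; exact hlρ

/-- polynomial decomposition with the degrees of `Q` and `R` specified:
`deg Q = 2n−2`, `deg R = 2n−2` for odd `n`; `deg Q = 2n−4`, `deg R = 2n` for even `n`. -/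
theorem polynomial_decomposition_degrees (n : ℕ) (hn : 1 ≤ n) (t : Fin n → ℝ)
    (ht0 : ∀ k, 0 < t k) (htmono : StrictMono t)
    (r : ℝ) (hr : ∀ k, t k < r) :
    ∃ Q R : Polynomial ℝ,
      (∀ x : ℝ, Q.eval (-x) = Q.eval x) ∧ (∀ x : ℝ, R.eval (-x) = R.eval x) ∧
      (∀ x : ℝ, 0 ≤ Q.eval x) ∧ (∀ x : ℝ, 0 ≤ R.eval x) ∧
      (∀ x : ℝ, (∏ k, (x ^ 2 - t k ^ 2)) = (x ^ 2 - r ^ 2) * Q.eval x + R.eval x) ∧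
      Q.natDegree = (if Odd n then 2 * n - 2 else 2 * n - 4) ∧
      R.natDegree = (if Odd n then 2 * n - 2 else 2 * n) := by
  classical
  set u : ℕ → ℝ := fun k => if h : k < n then (t ⟨k, h⟩) ^ 2 else 0 with hu
  have hmono : ∀ i j, i < j → j < n → u i < u j := by
    intro i j hij hj
    have hi : i < n := lt_trans hij hj
    simp only [hu, dif_pos hi, dif_pos hj]
    have h1 : t ⟨i, hi⟩ < t ⟨j, hj⟩ := htmono (by exact hij)
    have h2 : 0 < t ⟨i, hi⟩ := ht0 _
    nlinarith
  have hbd : ∀ k, k < n → u k < r ^ 2 := by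
    intro k hk
    simp only [hu, dif_pos hk]
    have h1 : t ⟨k, hk⟩ < r := hr _
    have h2 : 0 < t ⟨k, hk⟩ := ht0 _
    nlinarith
  obtain ⟨q, ρ, hq0, hρ0, hP, hdq, hdρ, hlq, hlρ⟩ := aux_decomp (r ^ 2) u n hn hmono hbd
  have hqne : q ≠ 0 := leadingCoeff_ne_zero.mp (ne_of_gt hlq)
  have hρne : ρ ≠ 0 := leadingCoeff_ne_zero.mp (ne_of_gt hlρ)
  refine ⟨q.comp (X ^ 2), ρ.comp (X ^ 2), ?_, ?_, ?_, ?_, ?_, ?_, ?_⟩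
  · intro x; simp [eval_comp]
  · intro x; simp [eval_comp]
  · intro x; rw [eval_comp]; simp only [eval_pow, eval_X]; exact hq0 _ (sq_nonneg x)
  · intro x; rw [eval_comp]; simp only [eval_pow, eval_X]; exact hρ0 _ (sq_nonneg x)
  · intro x
    have hev := congrArg (Polynomial.eval (x ^ 2)) hP
    rw [Polynomial.eval_prod] at hev
    simp only [eval_add, eval_mul, eval_sub, eval_X, eval_C] at hev
    have hprod : (∏ k, (x ^ 2 - t k ^ 2)) = ∏ k ∈ Finset.range n, (x ^ 2 - u k) := by
      rw [← Fin.prod_univ_eq_prod_range (fun k => x ^ 2 - u k) n]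
      apply Finset.prod_congr rfl
      intro k _
      simp only [hu, dif_pos k.isLt]
    rw [hprod]
    simp only [eval_comp, eval_pow, eval_X]
    exact hev
  · rw [natDegree_comp, natDegree_X_pow, hdq]
    rcases Nat.even_or_odd n with he | ho
    · have h1 : ¬ Odd n := Nat.not_odd_iff_even.mpr he
      have h2 : 2 ≤ n := by
        rcases he with ⟨j, hj⟩; omega
      rw [if_neg h1, if_neg h1]; omega
    · rw [if_pos ho, if_pos ho]; omega
  · rw [natDegree_comp, natDegree_X_pow, hdρ]
    rcases Nat.even_or_odd n with he | ho
    · have h1 : ¬ Odd n := Nat.not_odd_iff_even.mpr he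
      rw [if_neg h1, if_neg h1]; omega
    · rw [if_pos ho, if_pos ho]; omega
end

section
/- Let E : ℂ → ℂ be entire with |E(conj z)̄| < |E(z)| for all z in the open upper half-plane (Hermite–Biehler). Define A(z) = (E(z) + E*(z))/2 and B(z) = i(E(z) − E*(z))/2, where E*(z) = conj(E(conj z)). Then A and B are real entire functions (real on ℝ), and every zero of A and every zero of B is real. -/
/-- The conjugate entire function `E*(z) = conj (E (conj z))`. -/
noncomputable def conjFn (E : ℂ → ℂ) : ℂ → ℂ :=
  fun z => (starRingEnd ℂ) (E ((starRingEnd ℂ) z))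

/-- `A = (E + E*)/2`. -/
noncomputable def Afn (E : ℂ → ℂ) : ℂ → ℂ := fun z => (E z + conjFn E z) / 2

/-- `B = i(E − E*)/2`. -/
noncomputable def Bfn (E : ℂ → ℂ) : ℂ → ℂ := fun z => Complex.I * (E z - conjFn E z) / 2

lemma conjFn_differentiable (E : ℂ → ℂ) (hE : Differentiable ℂ E) :
    Differentiable ℂ (conjFn E) := by
  intro z
  set cz := (starRingEnd ℂ) z with hcz
  have h := (hE cz).hasDerivAt
  rw [hasDerivAt_iff_tendsto_slope] at h
  have hconj_cont : Continuous (starRingEnd ℂ) := Complex.continuous_conj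
  have hc : Filter.Tendsto (starRingEnd ℂ) (nhdsWithin z {z}ᶜ) (nhdsWithin cz {cz}ᶜ) := by
    apply Filter.Tendsto.inf (hconj_cont.tendsto z)
    apply Filter.tendsto_principal_principal.2
    intro w hw
    simp only [Set.mem_compl_iff, Set.mem_singleton_iff] at *
    intro hcw
    exact hw ((starRingEnd ℂ).injective hcw)
  have h2 : Filter.Tendsto (fun w => (starRingEnd ℂ) (slope E cz ((starRingEnd ℂ) w)))
      (nhdsWithin z {z}ᶜ) (nhds ((starRingEnd ℂ) (deriv E cz))) :=
    (hconj_cont.tendsto _).comp (h.comp hc)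
  have heq : ∀ w : ℂ, (starRingEnd ℂ) (slope E cz ((starRingEnd ℂ) w))
      = slope (conjFn E) z w := by
    intro w
    simp only [slope_def_field, conjFn, map_div₀, map_sub]
    simp [hcz]
  have h3 : Filter.Tendsto (slope (conjFn E) z) (nhdsWithin z {z}ᶜ)
      (nhds ((starRingEnd ℂ) (deriv E cz))) := by
    refine h2.congr fun w => heq w
  exact (hasDerivAt_iff_tendsto_slope.2 h3).differentiableAt

lemma conjFn_real (E : ℂ → ℂ) (x : ℝ) : conjFn E x = (starRingEnd ℂ) (E x) := by
  simp [conjFn, Complex.conj_ofReal]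

/-- if `E` is entire and Hermite–Biehler (`|E*(z)| < |E(z)|` for `Im z > 0`),
then `A` and `B` are real entire (real-valued on `ℝ`) and all their zeros are real. -/
theorem hermiteBiehler_A_B_real_entire_real_zeros (E : ℂ → ℂ)
    (hE : Differentiable ℂ E)
    (hHB : ∀ z : ℂ, 0 < z.im → ‖conjFn E z‖ < ‖E z‖) :
    Differentiable ℂ (Afn E) ∧ Differentiable ℂ (Bfn E) ∧
    (∀ x : ℝ, (Afn E x).im = 0) ∧ (∀ x : ℝ, (Bfn E x).im = 0) ∧
    (∀ z : ℂ, Afn E z = 0 → z.im = 0) ∧ (∀ z : ℂ, Bfn E z = 0 → z.im = 0) := by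
  have hC := conjFn_differentiable E hE
  have habs : ∀ z : ℂ, z.im ≠ 0 → ‖E z‖ ≠ ‖conjFn E z‖ := by
    intro z hz
    rcases lt_or_gt_of_ne hz with h | h
    · have h' := hHB ((starRingEnd ℂ) z) (by simpa [Complex.conj_im] using neg_pos.2 h)
      have e1 : ‖conjFn E ((starRingEnd ℂ) z)‖ = ‖E z‖ := by
        simp [conjFn]
      rw [e1] at h'
      have e2 : ‖conjFn E z‖ = ‖E ((starRingEnd ℂ) z)‖ := by
        simp [conjFn]
      rw [e2]
      exact ne_of_lt h'
    · exact ne_of_gt (hHB z h)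
  refine ⟨?_, ?_, ?_, ?_, ?_, ?_⟩
  · exact ((hE.add hC).div_const 2)
  · exact (((differentiable_const _).mul (hE.sub hC)).div_const 2)
  · intro x
    simp [Afn, conjFn_real, Complex.div_im, Complex.add_im, Complex.conj_im]
  · intro x
    simp [Bfn, conjFn_real, Complex.div_im, Complex.mul_im, Complex.sub_re, Complex.sub_im,
      Complex.conj_im, Complex.conj_re, Complex.I_re, Complex.I_im]
  · intro z hz
    by_contra him
    have hzero : E z = - conjFn E z := by
      have : E z + conjFn E z = 0 := by
        have := hz
        simp only [Afn] at this
        field_simp at this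
        linear_combination this
      exact eq_neg_of_add_eq_zero_left this
    have : ‖E z‖ = ‖conjFn E z‖ := by
      rw [hzero, norm_neg]
    exact (habs z him) this
  · intro z hz
    by_contra him
    have hzero : E z = conjFn E z := by
      have h0 : Complex.I * (E z - conjFn E z) = 0 := by
        have := hz
        simp only [Bfn] at this
        field_simp at this
        linear_combination this
      have := mul_eq_zero.1 h0
      rcases this with h | h
      · exact absurd h Complex.I_ne_zero
      · exact sub_eq_zero.1 h
    have : ‖E z‖ = ‖conjFn E z‖ := by rw [hzero]
    exact (habs z him) this
end

section
/- Let δ > 0 and let F(z) = cos²(δz/2)/(z² − (π/δ)²). Then F extends to an entire function of exponential type δ, F is real-valued on ℝ, F(x) ≥ 0 for |x| ≥ π/δ, F ∈ L¹(ℝ), and ∫_ℝ F(x) dx = 0. -/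
open MeasureTheory

/-- The exponential type `τ(F) = limsup_{|z|→∞} log|F(z)| / |z|`. -/
noncomputable def expType (F : ℂ → ℂ) : ℝ :=
  Filter.limsup (fun z => Real.log ‖F z‖ / ‖z‖)
    (Filter.comap (fun z : ℂ => ‖z‖) Filter.atTop)

namespace ExtremizerAux

open Complex Filter Set

/-- `S z = sin z / z`, extended entirely. -/
noncomputable def S : ℂ → ℂ := dslope Complex.sin 0

lemma S_diff : Differentiable ℂ S := by
  rw [← differentiableOn_univ]
  exact (Complex.differentiableOn_dslope univ_mem).mpr
    Complex.differentiable_sin.differentiableOn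

lemma S_apply {z : ℂ} (hz : z ≠ 0) : S z = Complex.sin z / z := by
  rw [S, dslope_of_ne _ hz, slope_def_field]
  simp

lemma S_zero : S 0 = 1 := by
  rw [S, dslope_same, Complex.deriv_sin, Complex.cos_zero]

lemma S_pi : S ((Real.pi : ℝ) : ℂ) = 0 := by
  rw [S_apply (by exact_mod_cast Real.pi_ne_zero)]
  simp [← Complex.ofReal_sin]

lemma S_neg_pi : S (-((Real.pi : ℝ) : ℂ)) = 0 := by
  rw [S_apply (by simpa using (by exact_mod_cast Real.pi_ne_zero : ((Real.pi:ℝ):ℂ) ≠ 0))]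
  simp [← Complex.ofReal_sin]

lemma S_real (t : ℝ) : ∃ r : ℝ, S ((t : ℝ) : ℂ) = (r : ℂ) := by
  rcases eq_or_ne t 0 with h | h
  · exact ⟨1, by simp [h, S_zero]⟩
  · exact ⟨Real.sin t / t, by
      rw [S_apply (by exact_mod_cast h)]
      push_cast
      rfl⟩

/-- The entire extension of `cos²(δz/2)/(z² - (π/δ)²)`. -/
noncomputable def G (δ : ℝ) : ℂ → ℂ := fun z =>
  -((δ : ℂ) / 2) ^ 2 * S ((δ : ℂ) * (z - ((Real.pi / δ : ℝ) : ℂ)) / 2)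
    * S ((δ : ℂ) * (z + ((Real.pi / δ : ℝ) : ℂ)) / 2)

lemma G_diff (δ : ℝ) : Differentiable ℂ (G δ) := by
  apply Differentiable.mul
  · apply Differentiable.mul (differentiable_const _)
    exact S_diff.comp (by fun_prop)
  · exact S_diff.comp (by fun_prop)

lemma hda (δ : ℝ) (hδ : 0 < δ) : (δ : ℂ) * ((Real.pi / δ : ℝ) : ℂ) = (Real.pi : ℝ) := by
  rw [← Complex.ofReal_mul]
  congr 1
  field_simp

lemma G_formula (δ : ℝ) (hδ : 0 < δ) : ∀ z : ℂ, z ^ 2 ≠ ((Real.pi / δ : ℝ) : ℂ) ^ 2 →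
    G δ z = Complex.cos (δ * z / 2) ^ 2 / (z ^ 2 - ((Real.pi / δ : ℝ) : ℂ) ^ 2) := by
  intro z hz
  set a : ℂ := ((Real.pi / δ : ℝ) : ℂ) with ha
  have hd0 : (δ : ℂ) ≠ 0 := by exact_mod_cast hδ.ne'
  have hz1 : z - a ≠ 0 := by
    intro h; exact hz (by rw [sub_eq_zero] at h; rw [h])
  have hz2 : z + a ≠ 0 := by
    intro h; apply hz
    have : z = -a := by linear_combination h
    rw [this]; ring
  have hzz : z ^ 2 - a ^ 2 ≠ 0 := sub_ne_zero.mpr hz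
  have e1 : (δ : ℂ) * (z - a) / 2 = (δ : ℂ) * z / 2 - (Real.pi : ℝ) / 2 := by
    rw [← hda δ hδ]; ring
  have e2 : (δ : ℂ) * (z + a) / 2 = (δ : ℂ) * z / 2 + (Real.pi : ℝ) / 2 := by
    rw [← hda δ hδ]; ring
  have a1 : (δ : ℂ) * (z - a) / 2 ≠ 0 := by
    apply div_ne_zero (mul_ne_zero hd0 hz1) two_ne_zero
  have a2 : (δ : ℂ) * (z + a) / 2 ≠ 0 := by
    apply div_ne_zero (mul_ne_zero hd0 hz2) two_ne_zero
  rw [G, S_apply a1, S_apply a2]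
  rw [show Complex.sin ((δ : ℂ) * (z - a) / 2) = -Complex.cos ((δ:ℂ) * z / 2) by
        rw [e1, Complex.sin_sub_pi_div_two],
      show Complex.sin ((δ : ℂ) * (z + a) / 2) = Complex.cos ((δ:ℂ) * z / 2) by
        rw [e2, Complex.sin_add_pi_div_two]]
  field_simp
  ring

/-- Real restriction of `G`. -/
noncomputable def Freal (δ : ℝ) : ℝ → ℝ := fun x =>
  if x ^ 2 = (Real.pi / δ) ^ 2 then 0
  else Real.cos (δ * x / 2) ^ 2 / (x ^ 2 - (Real.pi / δ) ^ 2)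

lemma G_ofReal (δ : ℝ) (hδ : 0 < δ) (x : ℝ) : G δ x = ((Freal δ x : ℝ) : ℂ) := by
  by_cases h : x ^ 2 = (Real.pi / δ) ^ 2
  · rw [Freal, if_pos h, Complex.ofReal_zero]
    rcases sq_eq_sq_iff_eq_or_eq_neg.mp h with rfl | rfl
    · have hS : S ((δ : ℂ) * (((Real.pi / δ : ℝ) : ℂ) + ((Real.pi / δ : ℝ) : ℂ)) / 2) = 0 := by
        rw [show (δ:ℂ) * (((Real.pi / δ : ℝ) : ℂ) + ((Real.pi / δ : ℝ) : ℂ)) / 2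
              = (δ:ℂ) * ((Real.pi / δ : ℝ) : ℂ) by ring, hda δ hδ, S_pi]
      show -((δ : ℂ) / 2) ^ 2 * _ * _ = 0
      rw [hS, mul_zero]
    · have hS : S ((δ : ℂ) * ((((-(Real.pi / δ) : ℝ)) : ℂ) - ((Real.pi / δ : ℝ) : ℂ)) / 2)
          = 0 := by
        rw [show (δ:ℂ) * ((((-(Real.pi / δ) : ℝ)) : ℂ) - ((Real.pi / δ : ℝ) : ℂ)) / 2
              = -((δ:ℂ) * ((Real.pi / δ : ℝ) : ℂ)) by push_cast; ring, hda δ hδ, S_neg_pi]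
      show -((δ : ℂ) / 2) ^ 2 * _ * _ = 0
      rw [hS, mul_zero, zero_mul]
  · have h' : (x : ℂ) ^ 2 ≠ ((Real.pi / δ : ℝ) : ℂ) ^ 2 := by
      intro hc; apply h; exact_mod_cast hc
    rw [G_formula δ hδ x h', Freal, if_neg h]
    push_cast
    rfl

lemma Freal_nonneg (δ : ℝ) (hδ : 0 < δ) (x : ℝ) (hx : Real.pi / δ ≤ |x|) :
    0 ≤ Freal δ x := by
  have ha0 : 0 < Real.pi / δ := div_pos Real.pi_pos hδ
  rw [Freal]
  split_ifs with h
  · exact le_rfl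
  · apply div_nonneg (sq_nonneg _)
    have h2 : (Real.pi / δ) ^ 2 ≤ x ^ 2 := by
      rw [← _root_.sq_abs x]
      exact pow_le_pow_left₀ ha0.le hx 2
    rcases lt_or_eq_of_le h2 with h3 | h3
    · linarith
    · exact absurd h3.symm h

/-- odd helper `g u = sin²(δu/2)/u`. -/
noncomputable def g (δ : ℝ) : ℝ → ℝ := fun u =>
  if u = 0 then 0 else Real.sin (δ * u / 2) ^ 2 / u

lemma g_apply (δ : ℝ) {u : ℝ} (hu : u ≠ 0) : g δ u = Real.sin (δ * u / 2) ^ 2 / u := by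
  rw [g, if_neg hu]

lemma g_odd (δ : ℝ) (u : ℝ) : g δ (-u) = -g δ u := by
  rcases eq_or_ne u 0 with rfl | hu
  · simp [g]
  · rw [g_apply δ (neg_ne_zero.mpr hu), g_apply δ hu]
    rw [show δ * -u / 2 = -(δ * u / 2) by ring, Real.sin_neg]
    ring

lemma g_cont (δ : ℝ) : Continuous (g δ) := by
  rw [continuous_iff_continuousAt]
  intro x
  rcases eq_or_ne x 0 with rfl | hx
  · rw [ContinuousAt, show g δ 0 = 0 by simp [g]]
    refine squeeze_zero_norm (a := fun u => δ ^ 2 / 4 * |u|) ?_ ?_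
    · intro u
      rcases eq_or_ne u 0 with rfl | hu
      · simp [g]
      · rw [g_apply δ hu, Real.norm_eq_abs, abs_div]
        rw [div_le_iff₀ (abs_pos.mpr hu)]
        have h1 : |Real.sin (δ * u / 2)| ≤ |δ * u / 2| := Real.abs_sin_le_abs
        have h2 : |Real.sin (δ * u / 2) ^ 2| = |Real.sin (δ * u / 2)| ^ 2 := by
          rw [_root_.abs_pow]
        rw [h2]
        calc |Real.sin (δ * u / 2)| ^ 2 ≤ |δ * u / 2| ^ 2 := by
              exact pow_le_pow_left₀ (abs_nonneg _) h1 2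
          _ = δ ^ 2 / 4 * |u| * |u| := by
              rw [_root_.sq_abs, mul_assoc, abs_mul_abs_self]
              ring
    · have : Continuous (fun u : ℝ => δ ^ 2 / 4 * |u|) := by fun_prop
      simpa using this.tendsto 0
  · have hev : (fun u : ℝ => Real.sin (δ * u / 2) ^ 2 / u) =ᶠ[nhds x] g δ := by
      filter_upwards [eventually_ne_nhds hx] with u hu
      rw [g_apply δ hu]
    apply ContinuousAt.congr _ hev
    exact ContinuousAt.div (by fun_prop) continuousAt_id hx

lemma algebra_helper (c a x : ℝ) (ha : a ≠ 0) (h1 : x - a ≠ 0) (h2 : x + a ≠ 0) :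
    c ^ 2 / (x ^ 2 - a ^ 2) = 1 / (2 * a) * ((-c) ^ 2 / (x - a) - c ^ 2 / (x + a)) := by
  have hx : x ^ 2 - a ^ 2 ≠ 0 := by
    rw [show x ^ 2 - a ^ 2 = (x - a) * (x + a) by ring]
    exact mul_ne_zero h1 h2
  field_simp
  ring

lemma g_zero (δ : ℝ) : g δ 0 = 0 := by simp [g]

lemma g_key (δ : ℝ) (hδ : 0 < δ) (x : ℝ) :
    Freal δ x = 1 / (2 * (Real.pi / δ)) * (g δ (x - Real.pi / δ) - g δ (x + Real.pi / δ)) := by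
  have ha0 : 0 < Real.pi / δ := div_pos Real.pi_pos hδ
  have hpa : δ * (Real.pi / δ) = Real.pi := by field_simp
  rcases eq_or_ne x (Real.pi / δ) with rfl | h1
  · rw [Freal, if_pos rfl]
    have hgg : g δ (Real.pi / δ + Real.pi / δ) = 0 := by
      rw [g_apply δ (by linarith), show δ * (Real.pi / δ + Real.pi / δ) / 2
            = δ * (Real.pi / δ) by ring, hpa, Real.sin_pi]
      norm_num
    rw [sub_self, g_zero, hgg]
    norm_num
  rcases eq_or_ne x (-(Real.pi / δ)) with rfl | h2
  · rw [Freal, if_pos (by ring)]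
    have hgg : g δ (-(Real.pi / δ) - Real.pi / δ) = 0 := by
      rw [g_apply δ (by intro h; nlinarith), show δ * (-(Real.pi / δ) - Real.pi / δ) / 2
            = -(δ * (Real.pi / δ)) by ring, hpa, Real.sin_neg, Real.sin_pi]
      norm_num
    rw [show -(Real.pi / δ) + Real.pi / δ = (0:ℝ) by ring, g_zero, hgg]
    norm_num
  · have hq : x ^ 2 ≠ (Real.pi / δ) ^ 2 := by
      intro h; rcases sq_eq_sq_iff_eq_or_eq_neg.mp h with h | h
      exacts [h1 h, h2 h]
    have hxa : x - Real.pi / δ ≠ 0 := sub_ne_zero.mpr h1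
    have hxa' : x + Real.pi / δ ≠ 0 := by
      intro h; exact h2 (by linarith)
    rw [Freal, if_neg hq, g_apply δ hxa, g_apply δ hxa']
    have hd : δ ≠ 0 := hδ.ne'
    rw [show δ * (x - Real.pi / δ) / 2 = δ * x / 2 - Real.pi / 2 by field_simp,
      show δ * (x + Real.pi / δ) / 2 = δ * x / 2 + Real.pi / 2 by field_simp,
      Real.sin_sub_pi_div_two, Real.sin_add_pi_div_two]
    exact algebra_helper (Real.cos (δ * x / 2)) (Real.pi / δ) x ha0.ne' hxa hxa'

lemma Freal_eq (δ : ℝ) (hδ : 0 < δ) : Freal δ = fun x : ℝ => (G δ x).re := by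
  funext x
  rw [G_ofReal δ hδ x, Complex.ofReal_re]

lemma Freal_cont (δ : ℝ) (hδ : 0 < δ) : Continuous (Freal δ) := by
  rw [Freal_eq δ hδ]
  exact Complex.continuous_re.comp ((G_diff δ).continuous.comp continuous_ofReal)

lemma intStep (δ : ℝ) (hδ : 0 < δ) (R : ℝ) :
    ∫ x in (-R)..R, Freal δ x
      = -(1 / (Real.pi / δ)) * ∫ x in (R - Real.pi / δ)..(R + Real.pi / δ), g δ x := by
  set a : ℝ := Real.pi / δ with ha
  have ha0 : 0 < a := div_pos Real.pi_pos hδ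
  have hg := g_cont δ
  have hi : ∀ c d : ℝ, IntervalIntegrable (g δ) volume c d := fun c d =>
    hg.intervalIntegrable c d
  have hi1 : IntervalIntegrable (fun x => g δ (x - a)) volume (-R) R :=
    (hg.comp (continuous_id.sub continuous_const)).intervalIntegrable _ _
  have hi2 : IntervalIntegrable (fun x => g δ (x + a)) volume (-R) R :=
    (hg.comp (continuous_id.add continuous_const)).intervalIntegrable _ _
  have step1 : ∫ x in (-R)..R, Freal δ x
      = 1 / (2 * a) * ∫ x in (-R)..R, (g δ (x - a) - g δ (x + a)) := by
    rw [← intervalIntegral.integral_const_mul]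
    exact intervalIntegral.integral_congr (fun x _ => g_key δ hδ x)
  have step2 : ∫ x in (-R)..R, (g δ (x - a) - g δ (x + a))
      = (∫ x in (-R)..R, g δ (x - a)) - ∫ x in (-R)..R, g δ (x + a) :=
    intervalIntegral.integral_sub hi1 hi2
  have step3 : (∫ x in (-R)..R, g δ (x - a)) = ∫ x in (-R - a)..(R - a), g δ x :=
    intervalIntegral.integral_comp_sub_right _ a
  have step4 : (∫ x in (-R)..R, g δ (x + a)) = ∫ x in (-R + a)..(R + a), g δ x :=
    intervalIntegral.integral_comp_add_right _ a
  have c1 : (∫ x in (-R - a)..(-R + a), g δ x) + ∫ x in (-R + a)..(R - a), g δ x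
      = ∫ x in (-R - a)..(R - a), g δ x :=
    intervalIntegral.integral_add_adjacent_intervals (hi _ _) (hi _ _)
  have c2 : (∫ x in (-R + a)..(R - a), g δ x) + ∫ x in (R - a)..(R + a), g δ x
      = ∫ x in (-R + a)..(R + a), g δ x :=
    intervalIntegral.integral_add_adjacent_intervals (hi _ _) (hi _ _)
  have codd : (∫ x in (-R - a)..(-R + a), g δ x) = -∫ x in (R - a)..(R + a), g δ x := by
    have h1 : (∫ x in (R - a)..(R + a), g δ (-x)) = ∫ x in (-(R + a))..(-(R - a)), g δ x :=
      intervalIntegral.integral_comp_neg (f := g δ)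
    have h2 : (∫ x in (R - a)..(R + a), g δ (-x)) = -∫ x in (R - a)..(R + a), g δ x := by
      rw [show (fun x => g δ (-x)) = fun x => -(g δ x) from funext (g_odd δ),
        intervalIntegral.integral_neg]
    rw [show -R - a = -(R + a) by ring, show -R + a = -(R - a) by ring, ← h1, h2]
  rw [step1, step2, step3, step4]
  have key : (∫ x in (-R - a)..(R - a), g δ x) - ∫ x in (-R + a)..(R + a), g δ x
      = -2 * ∫ x in (R - a)..(R + a), g δ x := by linarith
  rw [key]
  have ha' : a ≠ 0 := ha0.ne'
  field_simp

lemma Freal_integrable (δ : ℝ) (hδ : 0 < δ) : Integrable (Freal δ) := by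
  set a : ℝ := Real.pi / δ with ha
  have ha0 : 0 < a := div_pos Real.pi_pos hδ
  set c : ℝ := 2 * a + 1 with hc
  obtain ⟨x₀, _, hx₀⟩ := (isCompact_Icc (a := -c) (b := c)).exists_isMaxOn
    (nonempty_Icc.mpr (by linarith)) ((Freal_cont δ hδ).abs.continuousOn)
  set M : ℝ := |Freal δ x₀| with hM
  have hM0 : 0 ≤ M := abs_nonneg _
  set C : ℝ := max 4 (M * (1 + c ^ 2)) with hC
  have hbound : ∀ x : ℝ, ‖Freal δ x‖ ≤ C * (1 + x ^ 2)⁻¹ := by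
    intro x
    rw [Real.norm_eq_abs]
    have h1x : (0:ℝ) < 1 + x ^ 2 := by positivity
    rcases le_or_gt |x| c with h | h
    · have hx2 : x ^ 2 ≤ c ^ 2 := by
        rw [← _root_.sq_abs x]
        exact pow_le_pow_left₀ (abs_nonneg x) h 2
      have hMx : |Freal δ x| ≤ M := hx₀ (abs_le.mp h)
      calc |Freal δ x| ≤ M := hMx
        _ = M * (1 + x ^ 2) * (1 + x ^ 2)⁻¹ := by field_simp
        _ ≤ M * (1 + c ^ 2) * (1 + x ^ 2)⁻¹ := by
            apply mul_le_mul_of_nonneg_right _ (by positivity)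
            apply mul_le_mul_of_nonneg_left (by linarith) hM0
        _ ≤ C * (1 + x ^ 2)⁻¹ := by
            exact mul_le_mul_of_nonneg_right (le_max_right _ _) (by positivity)
    · have hx1 : 1 ≤ |x| := by linarith
      have hxa : a ≤ (|x| - 1)/2 := by linarith
      have h3 : |x| ^ 2 = x ^ 2 := _root_.sq_abs x
      have h2 : a ^ 2 ≤ ((|x| - 1)/2) ^ 2 := pow_le_pow_left₀ ha0.le hxa 2
      have hden : (1 + x ^ 2) / 4 ≤ x ^ 2 - a ^ 2 := by nlinarith
      have hpos : 0 < x ^ 2 - a ^ 2 := by nlinarith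
      have hne : x ^ 2 ≠ a ^ 2 := by intro hh; rw [hh] at hpos; simp at hpos
      rw [Freal, if_neg hne, abs_div]
      calc |Real.cos (δ * x / 2) ^ 2| / |x ^ 2 - a ^ 2|
          ≤ 1 / ((1 + x ^ 2)/4) := by
            apply div_le_div₀ (by norm_num)
            · rw [_root_.abs_pow]
              exact pow_le_one₀ (abs_nonneg _) (Real.abs_cos_le_one _)
            · positivity
            · rw [abs_of_pos hpos]; exact hden
        _ = 4 * (1 + x ^ 2)⁻¹ := by field_simp
        _ ≤ C * (1 + x ^ 2)⁻¹ :=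
            mul_le_mul_of_nonneg_right (le_max_left _ _) (by positivity)
  exact (integrable_inv_one_add_sq.const_mul C).mono'
    ((Freal_cont δ hδ).aestronglyMeasurable) (ae_of_all _ hbound)

lemma Freal_integral_zero (δ : ℝ) (hδ : 0 < δ) : ∫ x : ℝ, Freal δ x = 0 := by
  set a : ℝ := Real.pi / δ with ha
  have ha0 : 0 < a := div_pos Real.pi_pos hδ
  have h1 : Tendsto (fun R : ℝ => ∫ x in (-R)..R, Freal δ x) atTop
      (nhds (∫ x : ℝ, Freal δ x)) :=
    intervalIntegral_tendsto_integral (Freal_integrable δ hδ)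
      tendsto_neg_atTop_atBot tendsto_id
  have h2 : Tendsto (fun R : ℝ => ∫ x in (-R)..R, Freal δ x) atTop (nhds 0) := by
    have heq : (fun R : ℝ => ∫ x in (-R)..R, Freal δ x)
        = fun R => -(1/a) * ∫ x in (R - a)..(R + a), g δ x := funext (intStep δ hδ)
    rw [heq]
    apply squeeze_zero_norm' (a := fun R : ℝ => 2 / (R - a))
    · filter_upwards [eventually_ge_atTop (a + 1)] with R hR
      have hRa : 1 ≤ R - a := by linarith
      have hInt : ‖∫ x in (R - a)..(R + a), g δ x‖ ≤ (1/(R - a)) * |(R + a) - (R - a)| := by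
        apply intervalIntegral.norm_integral_le_of_norm_le_const
        intro x hx
        rw [Set.uIoc_of_le (by linarith)] at hx
        have hx0 : 0 < x := by linarith [hx.1]
        rw [Real.norm_eq_abs, g_apply δ hx0.ne', abs_div, abs_of_pos hx0]
        apply div_le_div₀ (by norm_num)
        · rw [_root_.abs_pow]
          exact pow_le_one₀ (abs_nonneg _) (Real.abs_sin_le_one _)
        · linarith
        · linarith [hx.1]
      have ha' : a ≠ 0 := ha0.ne'
      have hRa' : R - a ≠ 0 := by linarith
      calc ‖-(1/a) * ∫ x in (R - a)..(R + a), g δ x‖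
          = (1/a) * ‖∫ x in (R - a)..(R + a), g δ x‖ := by
            rw [norm_mul, norm_neg, Real.norm_eq_abs (1/a), abs_of_pos (by positivity)]
        _ ≤ (1/a) * ((1/(R - a)) * |(R + a) - (R - a)|) :=
            mul_le_mul_of_nonneg_left hInt (by positivity)
        _ = 2 / (R - a) := by
            rw [show (R + a) - (R - a) = 2*a by ring, abs_of_pos (by linarith)]
            field_simp
    · have hsub : Tendsto (fun R : ℝ => R - a) atTop atTop := by
        simpa [sub_eq_add_neg] using tendsto_atTop_add_const_right atTop (-a) tendsto_id
      exact Tendsto.div_atTop tendsto_const_nhds hsub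
  exact tendsto_nhds_unique h1 h2

lemma abs_cos_le (w : ℂ) : ‖Complex.cos w‖ ≤ Real.exp (‖w‖) := by
  have key : ∀ u : ℂ, ‖u‖ ≤ ‖w‖ →
      ‖Complex.exp (u * Complex.I)‖ ≤ Real.exp (‖w‖) := by
    intro u hu
    rw [Complex.norm_exp]
    apply Real.exp_le_exp.mpr
    have h1 : (u * Complex.I).re = -u.im := by simp
    rw [h1]
    calc -u.im ≤ |u.im| := neg_le_abs _
      _ ≤ ‖u‖ := Complex.abs_im_le_norm u
      _ ≤ ‖w‖ := hu
  have e2 : ‖Complex.exp (-w * Complex.I)‖ ≤ Real.exp (‖w‖) :=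
    key (-w) (le_of_eq (norm_neg w))
  have e1 : ‖Complex.exp (w * Complex.I)‖ ≤ Real.exp (‖w‖) :=
    key w le_rfl
  have tri : ‖Complex.exp (w * Complex.I) + Complex.exp (-w * Complex.I)‖
      ≤ ‖Complex.exp (w * Complex.I)‖ + ‖Complex.exp (-w * Complex.I)‖ :=
    norm_add_le _ _
  rw [Complex.cos, norm_div, Complex.norm_two]
  linarith

lemma expType_upper (δ : ℝ) (hδ : 0 < δ) :
    ∀ z : ℂ, Real.pi / δ + 2 ≤ ‖z‖ →
      Real.log (‖G δ z‖) / ‖z‖ ≤ δ := by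
  intro z hz
  set a : ℝ := Real.pi / δ with ha
  have ha0 : 0 < a := div_pos Real.pi_pos hδ
  have hz1 : (1:ℝ) ≤ ‖z‖ := by linarith
  have hz0 : (0:ℝ) < ‖z‖ := by linarith
  have hzsq : a ^ 2 < ‖z‖ ^ 2 := by nlinarith
  have hz2 : z ^ 2 ≠ ((a : ℝ) : ℂ) ^ 2 := by
    intro h
    have : ‖z ^ 2‖ = ‖((a : ℝ) : ℂ) ^ 2‖ := by rw [h]
    rw [norm_pow, norm_pow, Complex.norm_real, Real.norm_eq_abs, abs_of_pos ha0] at this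
    nlinarith
  have hden : (1:ℝ) ≤ ‖z ^ 2 - ((a : ℝ) : ℂ) ^ 2‖ := by
    have h1 := norm_sub_norm_le (z ^ 2) (((a : ℝ) : ℂ) ^ 2)
    rw [
      norm_pow, norm_pow, Complex.norm_real, Real.norm_eq_abs, abs_of_pos ha0] at h1
    nlinarith
  have habs : ‖G δ z‖ ≤ Real.exp (δ * ‖z‖) := by
    rw [G_formula δ hδ z hz2, norm_div, norm_pow]
    have hnum : ‖Complex.cos ((δ:ℂ) * z / 2)‖ ^ 2
        ≤ Real.exp (δ * ‖z‖) := by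
      have h1 : ‖(δ:ℂ) * z / 2‖ = δ * ‖z‖ / 2 := by
        rw [norm_div, norm_mul, Complex.norm_real, Real.norm_eq_abs, Complex.norm_two, abs_of_pos hδ]
      calc ‖Complex.cos ((δ:ℂ) * z / 2)‖ ^ 2
          ≤ Real.exp (δ * ‖z‖ / 2) ^ 2 := by
            apply pow_le_pow_left₀ (norm_nonneg _)
            rw [← h1]; exact abs_cos_le _
        _ = Real.exp (δ * ‖z‖) := by
            rw [sq, ← Real.exp_add]
            congr 1
            ring
    have hDpos : (0:ℝ) < ‖z ^ 2 - ((a : ℝ) : ℂ) ^ 2‖ :=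
      lt_of_lt_of_le one_pos hden
    have hfrac : ‖Complex.cos ((δ:ℂ) * z / 2)‖ ^ 2
          / ‖z ^ 2 - ((a : ℝ) : ℂ) ^ 2‖
        ≤ ‖Complex.cos ((δ:ℂ) * z / 2)‖ ^ 2 := by
      rw [div_le_iff₀ hDpos]
      nlinarith [sq_nonneg (‖Complex.cos ((δ:ℂ) * z / 2)‖)]
    exact hfrac.trans hnum
  have hlog : Real.log (‖G δ z‖) ≤ δ * ‖z‖ := by
    rcases eq_or_ne (‖G δ z‖) 0 with h0 | h0
    · rw [h0, Real.log_zero]; positivity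
    · have hpos : 0 < ‖G δ z‖ :=
        lt_of_le_of_ne (norm_nonneg _) (Ne.symm h0)
      calc Real.log (‖G δ z‖) ≤ Real.log (Real.exp (δ * ‖z‖)) :=
            Real.log_le_log hpos habs
        _ = δ * ‖z‖ := Real.log_exp _
  rw [div_le_iff₀ hz0]
  exact hlog

set_option maxHeartbeats 1000000 in
lemma expType_lower (δ : ℝ) (hδ : 0 < δ) {ε : ℝ} (hε : 0 < ε) (R : ℝ) :
    ∃ z : ℂ, R ≤ ‖z‖ ∧
      δ - ε ≤ Real.log (‖G δ z‖) / ‖z‖ := by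
  set a : ℝ := Real.pi / δ with ha
  have ha0 : 0 < a := div_pos Real.pi_pos hδ
  set y : ℝ := max (max R 8) (max a ((6/ε)^2 + 1)) with hy
  have hyR : R ≤ y := le_trans (le_max_left _ _) (le_max_left _ _)
  have hy8 : (8:ℝ) ≤ y := le_trans (le_max_right _ _) (le_max_left _ _)
  have hya : a ≤ y := le_trans (le_max_left _ _) (le_max_right _ _)
  have hyε : (6/ε)^2 + 1 ≤ y := le_trans (le_max_right _ _) (le_max_right _ _)
  have hy0 : 0 < y := by linarith
  refine ⟨(y : ℂ) * Complex.I, ?_, ?_⟩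
  · rw [norm_mul, Complex.norm_I, Complex.norm_real, Real.norm_eq_abs, mul_one, abs_of_pos hy0]
    exact hyR
  have habsz : ‖(y : ℂ) * Complex.I‖ = y := by
    rw [norm_mul, Complex.norm_I, Complex.norm_real, Real.norm_eq_abs, mul_one, abs_of_pos hy0]
  have hzsq : ((y : ℂ) * Complex.I) ^ 2 = ((-(y^2) : ℝ) : ℂ) := by
    push_cast
    rw [mul_pow, Complex.I_sq]
    ring
  have hz2 : ((y : ℂ) * Complex.I) ^ 2 ≠ ((a : ℝ) : ℂ) ^ 2 := by
    rw [hzsq, show ((a : ℝ) : ℂ) ^ 2 = ((a ^ 2 : ℝ) : ℂ) by push_cast; ring]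
    intro h
    rw [Complex.ofReal_inj] at h
    nlinarith
  -- compute |G z|
  have harg : (δ : ℂ) * ((y : ℂ) * Complex.I) / 2 = ((δ * y / 2 : ℝ) : ℂ) * Complex.I := by
    push_cast
    ring
  have hcos : ‖Complex.cos ((δ:ℂ) * ((y : ℂ) * Complex.I) / 2)‖
      = Real.cosh (δ * y / 2) := by
    rw [harg, Complex.cos_mul_I, ← Complex.ofReal_cosh, Complex.norm_real, Real.norm_eq_abs,
      abs_of_pos (Real.cosh_pos _)]
  have hdenom : ‖((y : ℂ) * Complex.I) ^ 2 - ((a : ℝ) : ℂ) ^ 2‖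
      = y^2 + a^2 := by
    rw [hzsq, show ((a : ℝ) : ℂ) ^ 2 = ((a ^ 2 : ℝ) : ℂ) by push_cast; ring,
      ← Complex.ofReal_sub, Complex.norm_real, Real.norm_eq_abs]
    rw [show -(y^2) - a^2 = -(y^2 + a^2) by ring, abs_neg, abs_of_pos (by nlinarith)]
  have hGabs : ‖G δ ((y : ℂ) * Complex.I)‖
      = Real.cosh (δ * y / 2) ^ 2 / (y^2 + a^2) := by
    rw [G_formula δ hδ _ hz2, norm_div, norm_pow, hcos, hdenom]
  have hcosh_ge : Real.exp (δ * y / 2) / 2 ≤ Real.cosh (δ * y / 2) := by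
    rw [Real.cosh_eq]
    have := Real.exp_pos (-(δ * y / 2))
    linarith
  have hGlb : Real.exp (δ * y) / (4 * (y^2 + a^2)) ≤ ‖G δ ((y : ℂ) * Complex.I)‖ := by
    rw [hGabs]
    have h1 : Real.exp (δ * y) / 4 ≤ Real.cosh (δ * y / 2) ^ 2 := by
      have h2 : (Real.exp (δ * y / 2) / 2) ^ 2 ≤ Real.cosh (δ * y / 2) ^ 2 := by
        apply pow_le_pow_left₀ (by positivity) hcosh_ge
      calc Real.exp (δ * y) / 4 = (Real.exp (δ * y / 2) / 2) ^ 2 := by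
            rw [div_pow, sq, ← Real.exp_add]
            norm_num
        _ ≤ _ := h2
    rw [div_le_div_iff₀ (by positivity) (by nlinarith)]
    nlinarith [Real.exp_pos (δ * y)]
  -- the log estimate
  have hylog : Real.log (4 * (y^2 + a^2)) ≤ ε * y := by
    have h1 : 4 * (y^2 + a^2) ≤ y^3 := by nlinarith
    have h2 : Real.log (4 * (y^2 + a^2)) ≤ Real.log (y^3) :=
      Real.log_le_log (by positivity) h1
    have h3 : Real.log (y^3) = 3 * Real.log y := by
      rw [Real.log_pow]
      norm_num
    have hsq : Real.sqrt y ^ 2 = y := Real.sq_sqrt hy0.le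
    have hsqrt_pos : 0 < Real.sqrt y := Real.sqrt_pos.mpr hy0
    have h5 : Real.log y = 2 * Real.log (Real.sqrt y) := by
      conv_lhs => rw [← hsq]
      rw [Real.log_pow]
      push_cast
      ring
    have h4 : Real.log y ≤ 2 * Real.sqrt y := by
      have h41 := Real.log_le_sub_one_of_pos hsqrt_pos
      rw [h5]
      linarith
    have h6 : 6 / ε ≤ Real.sqrt y := by
      rw [show (6:ℝ)/ε = Real.sqrt ((6/ε)^2) from (Real.sqrt_sq (by positivity)).symm]
      exact Real.sqrt_le_sqrt (by linarith)
    have hsqrt_pos : 0 < Real.sqrt y := Real.sqrt_pos.mpr hy0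
    calc Real.log (4 * (y^2 + a^2)) ≤ 3 * Real.log y := by rw [← h3]; exact h2
      _ ≤ 6 * Real.sqrt y := by linarith
      _ ≤ ε * y := by
          have : ε * y = ε * Real.sqrt y * Real.sqrt y := by
            rw [mul_assoc, ← sq, hsq]
          rw [this]
          have h7 : 6 ≤ ε * Real.sqrt y := by
            calc (6:ℝ) = ε * (6/ε) := by field_simp
              _ ≤ ε * Real.sqrt y := by
                  apply mul_le_mul_of_nonneg_left h6 hε.le
          nlinarith
  have hGpos : 0 < ‖G δ ((y : ℂ) * Complex.I)‖ := by
    apply lt_of_lt_of_le _ hGlb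
    positivity
  have hlog2 : δ * y - ε * y ≤ Real.log (‖G δ ((y : ℂ) * Complex.I)‖) := by
    have h1 : Real.log (Real.exp (δ * y) / (4 * (y^2 + a^2)))
        ≤ Real.log (‖G δ ((y : ℂ) * Complex.I)‖) :=
      Real.log_le_log (by positivity) hGlb
    rw [Real.log_div (Real.exp_pos _).ne' (by positivity), Real.log_exp] at h1
    linarith
  rw [habsz, le_div_iff₀ hy0]
  nlinarith
lemma expType_eq (δ : ℝ) (hδ : 0 < δ) : expType (G δ) = δ := by
  rw [expType, Filter.limsup_eq]
  have hmem : ∀ᶠ z in comap (fun z : ℂ => ‖z‖) atTop,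
      Real.log (‖G δ z‖) / ‖z‖ ≤ δ := by
    rw [Filter.eventually_comap]
    filter_upwards [Filter.eventually_ge_atTop (Real.pi / δ + 2)] with r hr z hz
    exact expType_upper δ hδ z (by rw [hz]; exact hr)
  have hlb : ∀ b ∈ {a | ∀ᶠ z in comap (fun z : ℂ => ‖z‖) atTop,
      Real.log (‖G δ z‖) / ‖z‖ ≤ a}, δ ≤ b := by
    intro b hb
    by_contra hlt
    push_neg at hlt
    have hε : 0 < (δ - b)/2 := by linarith
    rw [Set.mem_setOf_eq, Filter.eventually_comap, Filter.eventually_atTop] at hb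
    obtain ⟨R, hR⟩ := hb
    obtain ⟨z, hz1, hz2⟩ := expType_lower δ hδ hε R
    have := hR (‖z‖) hz1 z rfl
    linarith
  apply le_antisymm
  · exact csInf_le ⟨δ, fun b hb => hlb b hb⟩ hmem
  · exact le_csInf ⟨δ, hmem⟩ hlb

end ExtremizerAux

/-- `F(z) = cos²(δz/2)/(z² − (π/δ)²)` extends to an entire function of
exponential type `δ`, real-valued on `ℝ`, nonnegative for `|x| ≥ π/δ`, integrable on
`ℝ`, with `∫_ℝ F = 0`. -/
theorem extremizer_lebesgue (δ : ℝ) (hδ : 0 < δ) :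
    ∃ G : ℂ → ℂ, Differentiable ℂ G ∧
      (∀ z : ℂ, z ^ 2 ≠ ((Real.pi / δ : ℝ) : ℂ) ^ 2 →
        G z = Complex.cos (δ * z / 2) ^ 2 / (z ^ 2 - ((Real.pi / δ : ℝ) : ℂ) ^ 2)) ∧
      expType G = δ ∧
      (∀ x : ℝ, (G x).im = 0) ∧
      (∀ x : ℝ, Real.pi / δ ≤ |x| → 0 ≤ (G x).re) ∧
      Integrable (fun x : ℝ => (G x).re) ∧
      ∫ x : ℝ, (G x).re = 0 := by
  refine ⟨ExtremizerAux.G δ, ExtremizerAux.G_diff δ, ExtremizerAux.G_formula δ hδ,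
    ExtremizerAux.expType_eq δ hδ, ?_, ?_, ?_, ?_⟩
  · intro x
    rw [ExtremizerAux.G_ofReal δ hδ x, Complex.ofReal_im]
  · intro x hx
    rw [ExtremizerAux.G_ofReal δ hδ x, Complex.ofReal_re]
    exact ExtremizerAux.Freal_nonneg δ hδ x hx
  · have := ExtremizerAux.Freal_integrable δ hδ
    rwa [ExtremizerAux.Freal_eq δ hδ] at this
  · have := ExtremizerAux.Freal_integral_zero δ hδ
    rw [ExtremizerAux.Freal_eq δ hδ] at this
    exact this
end

section
/- Let μ be a locally finite, even, nonnegative Borel measure on ℝ, let δ ≥ 0, and let F : ℝ → ℝ be the restriction of a real entire function of exponential type at most δ, with F ∈ L¹(ℝ, μ), ∫ F dμ ≤ 0, and F eventually nonnegative with last sign change at radius r = r(F). If F is even and has exactly the sign changes 0 < t₁ < ... < tₙ < r on the positive axis, with factorization F(x) = (∏_{k=1}^n (x² − t_k²))(x² − r²)F₁(x) where F₁ is even, real entire of exponential type at most δ, and nonnegative on ℝ, then the function G(z) = (z² − r²)R(z)F₁(z) — where R is the polynomial from the polynomial decomposition ∏(x²−t_k²) = (x²−r²)Q(x)+R(x)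 with Q, R even and nonnegative on ℝ — satisfies: G is real entire of exponential type at most δ, G ∈ L¹(ℝ,μ), F(x) ≥ G(x) for all x ∈ ℝ, ∫ G dμ ≤ 0, and G(x) ≥ 0 exactly for |x| ≥ r. -/
open MeasureTheory Polynomial

/-- `F` has exponential type at most `δ`. -/
def ExpTypeLE (F : ℂ → ℂ) (δ : ℝ) : Prop :=
  ∀ ε > (0 : ℝ), ∃ C : ℝ, ∀ z : ℂ,
    ‖F z‖ ≤ C * Real.exp ((δ + ε) * ‖z‖)

/-- The entire function `G(z) = (z² − r²) R(z) F₁(z)`. -/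
noncomputable def Gc (r : ℝ) (R : Polynomial ℝ) (F₁ : ℂ → ℂ) : ℂ → ℂ :=
  fun z => (z ^ 2 - (r : ℂ) ^ 2) * (Polynomial.aeval z) R * F₁ z

/-- The restriction of `G` to `ℝ`: `G(x) = (x² − r²) R(x) F₁(x)`. -/
noncomputable def Gre (r : ℝ) (R : Polynomial ℝ) (F₁ : ℂ → ℂ) : ℝ → ℝ :=
  fun x => (x ^ 2 - r ^ 2) * R.eval x * (F₁ x).re

lemma poly_le_exp (m : ℕ) (ε : ℝ) (hε : 0 < ε) :
    ∃ C : ℝ, 0 ≤ C ∧ ∀ s : ℝ, 0 ≤ s → (1 + s) ^ m ≤ C * Real.exp (ε * s) := by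
  set K : ℝ := max 1 (m / ε) with hKdef
  have hK1 : (1:ℝ) ≤ K := le_max_left _ _
  have hK0 : (0:ℝ) < K := lt_of_lt_of_le one_pos hK1
  refine ⟨K ^ m, by positivity, fun s hs => ?_⟩
  have h2 : 1 + s / K ≤ Real.exp (s / K) := by linarith [Real.add_one_le_exp (s/K)]
  have h1 : 1 + s ≤ K * Real.exp (s / K) := by
    have : K * (1 + s / K) = K + s := by field_simp
    nlinarith [Real.exp_pos (s/K)]
  have h3 : (1 + s) ^ m ≤ (K * Real.exp (s / K)) ^ m :=
    pow_le_pow_left₀ (by linarith) h1 m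
  have h4 : (K * Real.exp (s / K)) ^ m = K ^ m * Real.exp (m * (s / K)) := by
    rw [mul_pow, ← Real.exp_nat_mul]
  have h5 : (m : ℝ) * (s / K) ≤ ε * s := by
    have hm : (m : ℝ) / ε ≤ K := le_max_right _ _
    have hm' : (m : ℝ) ≤ ε * K := by
      rw [div_le_iff₀ hε] at hm; linarith [hm]
    rw [div_eq_mul_inv, ← mul_assoc]
    rw [mul_inv_le_iff₀ hK0]
    nlinarith
  calc (1 + s) ^ m ≤ K ^ m * Real.exp (m * (s / K)) := by rw [← h4]; exact h3
    _ ≤ K ^ m * Real.exp (ε * s) := by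
        have := Real.exp_le_exp.2 h5
        nlinarith [pow_pos hK0 m]

lemma aeval_abs_le (R : Polynomial ℝ) (z : ℂ) :
    ‖(Polynomial.aeval z) R‖ ≤
      (∑ i ∈ Finset.range (R.natDegree + 1), |R.coeff i|) * (1 + ‖z‖) ^ R.natDegree := by
  rw [Polynomial.aeval_eq_sum_range]
  have h0 : 0 ≤ ‖z‖ := norm_nonneg z
  calc ‖∑ i ∈ Finset.range (R.natDegree + 1), R.coeff i • z ^ i‖
      ≤ ∑ i ∈ Finset.range (R.natDegree + 1), ‖R.coeff i • z ^ i‖ := by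
        simpa using
          norm_sum_le (Finset.range (R.natDegree + 1)) (fun i => R.coeff i • z ^ i)
    _ ≤ ∑ i ∈ Finset.range (R.natDegree + 1), |R.coeff i| * (1 + ‖z‖) ^ R.natDegree := by
        apply Finset.sum_le_sum
        intro i hi
        rw [Finset.mem_range, Nat.lt_succ_iff] at hi
        have : ‖R.coeff i • z ^ i‖ = |R.coeff i| * (‖z‖) ^ i := by
          simp [norm_smul, Real.norm_eq_abs, norm_pow]
        rw [this]
        apply mul_le_mul_of_nonneg_left _ (abs_nonneg _)
        calc (‖z‖) ^ i ≤ (1 + ‖z‖) ^ i :=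
              pow_le_pow_left₀ h0 (by linarith) i
          _ ≤ (1 + ‖z‖) ^ R.natDegree :=
              pow_le_pow_right₀ (by linarith) hi
    _ = _ := by rw [← Finset.sum_mul]

/-- reduction to one sign change.  Given `F` in the class `𝓔(μ;δ)`, even,
with sign changes `0 < t₁ < … < tₙ < r` and factorization
`F(x) = (∏ (x²−t_k²))(x²−r²)F₁(x)`, and the polynomial decomposition
`∏(x²−t_k²) = (x²−r²)Q(x)+R(x)` with `Q, R` even, nonnegative, `deg R ≤ 2n`, the
function `G(z) = (z²−r²)R(z)F₁(z)` is real entire of exponential type at most `δ`,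
belongs to `L¹(μ)`, satisfies `G ≤ F` on `ℝ`, `∫ G dμ ≤ 0`, and `G ≥ 0` exactly for
`|x| ≥ r`. -/
theorem reduction_to_one_sign_change (μ : Measure ℝ) [IsLocallyFiniteMeasure μ]
    (heven : μ.map (fun x => -x) = μ) (δ : ℝ) (hδ : 0 ≤ δ)
    (Fc F₁ : ℂ → ℂ) (hFc : Differentiable ℂ Fc) (hF₁ : Differentiable ℂ F₁)
    (hFtype : ExpTypeLE Fc δ) (hF₁type : ExpTypeLE F₁ δ)
    (hFreal : ∀ x : ℝ, (Fc x).im = 0) (hF₁real : ∀ x : ℝ, (F₁ x).im = 0)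
    (hFeven : ∀ z : ℂ, Fc (-z) = Fc z) (hF₁even : ∀ z : ℂ, F₁ (-z) = F₁ z)
    (hF₁pos : ∀ x : ℝ, 0 ≤ (F₁ x).re)
    (hFint : Integrable (fun x : ℝ => (Fc x).re) μ)
    (hFneg : ∫ x, (Fc x).re ∂μ ≤ 0)
    (n : ℕ) (hn : 1 ≤ n) (t : Fin n → ℝ) (r : ℝ)
    (ht0 : ∀ k, 0 < t k) (htmono : StrictMono t) (htr : ∀ k, t k < r) (hr : 0 < r)
    (hlast : ∀ x : ℝ, r ≤ |x| → 0 ≤ (Fc x).re)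
    (hfac : ∀ x : ℝ, (Fc x).re = (∏ k, (x ^ 2 - t k ^ 2)) * (x ^ 2 - r ^ 2) * (F₁ x).re)
    (Q R : Polynomial ℝ)
    (hQeven : ∀ x : ℝ, Q.eval (-x) = Q.eval x) (hReven : ∀ x : ℝ, R.eval (-x) = R.eval x)
    (hQ0 : ∀ x : ℝ, 0 ≤ Q.eval x) (hR0 : ∀ x : ℝ, 0 ≤ R.eval x)
    (hQR : ∀ x : ℝ, (∏ k, (x ^ 2 - t k ^ 2)) = (x ^ 2 - r ^ 2) * Q.eval x + R.eval x)
    (hRdeg : R.natDegree ≤ 2 * n) :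
    Differentiable ℂ (Gc r R F₁) ∧ ExpTypeLE (Gc r R F₁) δ ∧
    (∀ x : ℝ, (Gc r R F₁ x).im = 0 ∧ (Gc r R F₁ x).re = Gre r R F₁ x) ∧
    Integrable (Gre r R F₁) μ ∧
    (∀ x : ℝ, Gre r R F₁ x ≤ (Fc x).re) ∧
    (∫ x, Gre r R F₁ x ∂μ) ≤ 0 ∧
    (∀ x : ℝ, r ≤ |x| → 0 ≤ Gre r R F₁ x) ∧
    (∀ x : ℝ, |x| ≤ r → Gre r R F₁ x ≤ 0) := by
  -- Differentiability
  have hRd : Differentiable ℂ (fun z : ℂ => (Polynomial.aeval z) R) := by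
    have he : (fun z : ℂ => (Polynomial.aeval z) R)
        = fun z => (R.map (algebraMap ℝ ℂ)).eval z := by
      funext z; rw [Polynomial.aeval_def, Polynomial.eval_map]
    rw [he]
    exact (R.map (algebraMap ℝ ℂ)).differentiable
  have hGdiff : Differentiable ℂ (Gc r R F₁) := by
    unfold Gc
    exact (((differentiable_pow 2).sub_const _).mul hRd).mul hF₁
  -- Exponential type
  have hGtype : ExpTypeLE (Gc r R F₁) δ := by
    intro ε hε
    obtain ⟨C₁, hC₁⟩ := hF₁type (ε / 2) (by linarith)
    have hC₁0 : 0 ≤ C₁ := by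
      have := hC₁ 0
      nlinarith [norm_nonneg (F₁ 0), Real.exp_pos ((δ + ε/2) * ‖(0:ℂ)‖)]
    obtain ⟨C₂, hC₂0, hC₂⟩ := poly_le_exp (R.natDegree + 2) (ε / 2) (by linarith)
    set A : ℝ := ∑ i ∈ Finset.range (R.natDegree + 1), |R.coeff i| with hA
    have hA0 : 0 ≤ A := Finset.sum_nonneg fun i _ => abs_nonneg _
    refine ⟨(1 + r ^ 2) * A * C₂ * C₁, fun z => ?_⟩
    set s := ‖z‖ with hs
    have hs0 : 0 ≤ s := norm_nonneg z
    have h1 : ‖z ^ 2 - (r : ℂ) ^ 2‖ ≤ (1 + r ^ 2) * (1 + s) ^ 2 := by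
      have := norm_sub_le (z ^ 2) ((r : ℂ) ^ 2)
      have e1 : ‖z ^ 2‖ = s ^ 2 := by rw [norm_pow]
      have e2 : ‖(r : ℂ) ^ 2‖ = r ^ 2 := by
        rw [norm_pow]; simp [abs_of_pos hr]
      nlinarith [sq_nonneg s, sq_nonneg r, sq_nonneg (1 + s)]
    have h2 : ‖(Polynomial.aeval z) R‖ ≤ A * (1 + s) ^ R.natDegree :=
      aeval_abs_le R z
    have h3 : ‖F₁ z‖ ≤ C₁ * Real.exp ((δ + ε / 2) * s) := hC₁ z
    have hsplit : (1 + s) ^ 2 * (1 + s) ^ R.natDegree = (1 + s) ^ (R.natDegree + 2) := by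
      rw [← pow_add]; ring_nf
    have hpow : (1 + s) ^ (R.natDegree + 2) ≤ C₂ * Real.exp (ε / 2 * s) := hC₂ s hs0
    have habs : ‖Gc r R F₁ z‖
        = ‖z ^ 2 - (r : ℂ) ^ 2‖ * ‖(Polynomial.aeval z) R‖
          * ‖F₁ z‖ := by
      unfold Gc; rw [norm_mul, norm_mul]
    rw [habs]
    have hb1 : ‖z ^ 2 - (r : ℂ) ^ 2‖ * ‖(Polynomial.aeval z) R‖
        ≤ (1 + r ^ 2) * A * (1 + s) ^ (R.natDegree + 2) := by
      calc ‖z ^ 2 - (r : ℂ) ^ 2‖ * ‖(Polynomial.aeval z) R‖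
          ≤ ((1 + r ^ 2) * (1 + s) ^ 2) * (A * (1 + s) ^ R.natDegree) :=
            mul_le_mul h1 h2 (norm_nonneg _) (by positivity)
        _ = (1 + r ^ 2) * A * ((1 + s) ^ 2 * (1 + s) ^ R.natDegree) := by ring
        _ = _ := by rw [hsplit]
    calc ‖z ^ 2 - (r : ℂ) ^ 2‖ * ‖(Polynomial.aeval z) R‖
          * ‖F₁ z‖
        ≤ ((1 + r ^ 2) * A * (1 + s) ^ (R.natDegree + 2)) * (C₁ * Real.exp ((δ + ε / 2) * s)) :=
          mul_le_mul hb1 h3 (norm_nonneg _) (by positivity)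
      _ ≤ ((1 + r ^ 2) * A * (C₂ * Real.exp (ε / 2 * s))) * (C₁ * Real.exp ((δ + ε / 2) * s)) := by
          have := mul_le_mul_of_nonneg_left hpow (by positivity : (0:ℝ) ≤ (1 + r ^ 2) * A)
          have hx : (0:ℝ) ≤ C₁ * Real.exp ((δ + ε / 2) * s) := by positivity
          nlinarith
      _ = (1 + r ^ 2) * A * C₂ * C₁ * (Real.exp (ε / 2 * s) * Real.exp ((δ + ε / 2) * s)) := by
          ring
      _ = (1 + r ^ 2) * A * C₂ * C₁ * Real.exp ((δ + ε) * s) := by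
          rw [← Real.exp_add]; ring_nf
  -- Realness on ℝ
  have hGcre : ∀ x : ℝ, Gc r R F₁ x = ((Gre r R F₁ x : ℝ) : ℂ) := by
    intro x
    have hF1 : F₁ x = (((F₁ x).re : ℝ) : ℂ) := by
      apply Complex.ext <;> simp [hF₁real x]
    have hAe : (Polynomial.aeval (x : ℂ)) R = ((R.eval x : ℝ) : ℂ) := by
      have : (x : ℂ) = algebraMap ℝ ℂ x := rfl
      rw [this, Polynomial.aeval_algebraMap_apply]
      simp
    unfold Gc Gre
    rw [hAe, hF1]
    push_cast
    simp only [Complex.ofReal_re]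
  have hGreal : ∀ x : ℝ, (Gc r R F₁ x).im = 0 ∧ (Gc r R F₁ x).re = Gre r R F₁ x := by
    intro x; rw [hGcre x]; simp
  -- pointwise inequality
  have hsub : ∀ x : ℝ, (Fc x).re - Gre r R F₁ x
      = (x ^ 2 - r ^ 2) ^ 2 * Q.eval x * (F₁ x).re := by
    intro x; rw [hfac x, hQR x]; unfold Gre; ring
  have hle : ∀ x : ℝ, Gre r R F₁ x ≤ (Fc x).re := by
    intro x
    have h := hsub x
    nlinarith [mul_nonneg (mul_nonneg (sq_nonneg (x ^ 2 - r ^ 2)) (hQ0 x)) (hF₁pos x)]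
  -- sign conditions
  have hGpos : ∀ x : ℝ, r ≤ |x| → 0 ≤ Gre r R F₁ x := by
    intro x hx
    have h1 : r ^ 2 ≤ x ^ 2 := by nlinarith [abs_nonneg x, sq_abs x]
    exact mul_nonneg (mul_nonneg (by linarith) (hR0 x)) (hF₁pos x)
  have hGneg : ∀ x : ℝ, |x| ≤ r → Gre r R F₁ x ≤ 0 := by
    intro x hx
    have h1 : x ^ 2 ≤ r ^ 2 := by nlinarith [abs_nonneg x, sq_abs x]
    have := mul_nonneg (hR0 x) (hF₁pos x)
    unfold Gre
    rw [mul_assoc]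
    exact mul_nonpos_of_nonpos_of_nonneg (by linarith) this
  -- continuity
  have hGcont : Continuous (Gre r R F₁) := by
    have h1 : Continuous fun x : ℝ => (F₁ (x : ℂ)).re :=
      Complex.continuous_re.comp (hF₁.continuous.comp Complex.continuous_ofReal)
    unfold Gre
    exact (((continuous_pow 2).sub continuous_const).mul R.continuous).mul h1
  -- integrability
  have hGint : Integrable (Gre r R F₁) μ := by
    have h1 : IntegrableOn (Gre r R F₁) (Metric.closedBall 0 r) μ :=
      hGcont.continuousOn.integrableOn_compact (isCompact_closedBall 0 r)
    have h2 : IntegrableOn (Gre r R F₁) (Metric.closedBall 0 r)ᶜ μ := by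
      apply Integrable.mono (hFint.integrableOn)
        (hGcont.aestronglyMeasurable.restrict)
      refine (ae_restrict_iff' measurableSet_closedBall.compl).2 (ae_of_all _ fun x hx => ?_)
      have hx' : r ≤ |x| := by
        simp only [Set.mem_compl_iff, Metric.mem_closedBall, Real.dist_eq, sub_zero,
          not_le] at hx
        linarith
      rw [Real.norm_eq_abs, Real.norm_eq_abs, abs_of_nonneg (hGpos x hx')]
      exact le_trans (hle x) (le_abs_self _)
    have h3 := h1.union h2
    rwa [Set.union_compl_self, integrableOn_univ] at h3
  -- integral bound
  have hGintle : (∫ x, Gre r R F₁ x ∂μ) ≤ 0 := by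
    have hd : Integrable (fun x : ℝ => (Fc x).re - Gre r R F₁ x) μ := hFint.sub hGint
    have h0 : 0 ≤ ∫ x : ℝ, ((Fc x).re - Gre r R F₁ x) ∂μ := by
      apply integral_nonneg
      intro x
      have := hle x
      simp only [Pi.zero_apply]
      linarith
    rw [integral_sub hFint hGint] at h0
    linarith
  exact ⟨hGdiff, hGtype, hGreal, hGint, hle, hGintle, hGpos, hGneg⟩
end
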